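/- arXiv:1709.01494 — 5 statements merged into one kernel-verified Lean document; each statement's English description precedes it below -/
import Mathlib

section
/- For any tree T with n nodes and any integer parameter x ≥ 2, the maximum rank assigned by the recursive ranking procedure (leaves get rank 1; an internal node gets rank r_max+1 if at least x of its children have the maximum child rank r_max, otherwise rank r_max) is at most ⌈log_x n⌉. -/
/-- In a rooted tree with `n` nodes, the recursive ranking procedure
with threshold parameter `x ≥ 2` (leaves get rank 1; an internal node gets rank
`r_max + 1` if at least `x` of its children achieve the maximum child rank `r_max`,
and rank `r_max` otherwise) assigns every node a rank of at most `⌈log_x n⌉`. -/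
theorem max_rank_le_clog {V : Type*} [Fintype V] [DecidableEq V]
    (parent : V → Option V) (root : V)
    (hroot : parent root = none)
    (hconn : ∀ v : V, Relation.ReflTransGen (fun a b => parent a = some b) v root)
    (x : ℕ) (hx : 2 ≤ x)
    (rank : V → ℕ)
    (hleaf : ∀ v : V, (∀ w : V, parent w ≠ some v) → rank v = 1)
    (hinternal : ∀ v : V, (∃ w : V, parent w = some v) →
      rank v =
        if x ≤ (Finset.univ.filter (fun w : V => parent w = some v ∧
              rank w = (Finset.univ.filter (fun w : V => parent w = some v)).sup rank)).card
        then (Finset.univ.filter (fun w : V => parent w = some v)).sup rank + 1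
        else (Finset.univ.filter (fun w : V => parent w = some v)).sup rank)
    (hn : 2 ≤ Fintype.card V) :
    ∀ v : V, rank v ≤ Nat.clog x (Fintype.card V) := by
  classical
  set R : V → V → Prop := fun a b => parent a = some b with hR
  -- the step function
  set step : V → V := fun v => (parent v).getD v with hstep
  have hstep_of : ∀ {a b : V}, parent a = some b → step a = b := by
    intro a b h; simp [hstep, h]
  have hreach : ∀ v : V, ∃ k, step^[k] v = root := by
    intro v
    induction hconn v using Relation.ReflTransGen.head_induction_on with
    | refl => exact ⟨0, rfl⟩
    | head h' h ih =>
      obtain ⟨k, hk⟩ := ih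
      exact ⟨k + 1, by rw [Function.iterate_succ_apply, hstep_of h', hk]⟩
  -- the distance to the root
  set d : V → ℕ := fun v => Nat.find (hreach v) with hd
  have hd_spec : ∀ v, step^[d v] v = root := fun v => Nat.find_spec (hreach v)
  have hd_min : ∀ v k, step^[k] v = root → d v ≤ k := fun v k h => Nat.find_min' (hreach v) h
  have hd_step : ∀ {a b : V}, parent a = some b → d b < d a := by
    intro a b h
    have ha : a ≠ root := by
      intro e; rw [e, hroot] at h; exact Option.some_ne_none b h.symm
    have h1 : 1 ≤ d a := by
      rcases Nat.eq_zero_or_pos (d a) with h0 | h1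
      · exact absurd (by have := hd_spec a; rwa [h0] at this) ha
      · exact h1
    have h2 : step^[d a - 1] b = root := by
      have h3 := hd_spec a
      rw [show d a = (d a - 1) + 1 by omega, Function.iterate_succ_apply, hstep_of h] at h3
      exact h3
    have := hd_min b _ h2
    omega
  have hd_le : ∀ {a b : V}, Relation.ReflTransGen R a b → d b ≤ d a := by
    intro a b h
    induction h with
    | refl => exact le_rfl
    | tail hab hbc ih => exact le_trans (le_of_lt (hd_step hbc)) ih
  -- the set of descendants
  set desc : V → Finset V := fun v => Finset.univ.filter (fun u => Relation.ReflTransGen R u v)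
    with hdesc
  have hmem_desc : ∀ {u v : V}, u ∈ desc v ↔ Relation.ReflTransGen R u v := by
    intro u v; simp [hdesc]
  have hself : ∀ v : V, v ∈ desc v := fun v => hmem_desc.mpr Relation.ReflTransGen.refl
  have hdesc_pos : ∀ v : V, 1 ≤ (desc v).card := fun v =>
    Finset.card_pos.mpr ⟨v, hself v⟩
  -- comparability along the deterministic chains
  have hcomp : ∀ u a : V, Relation.ReflTransGen R u a → ∀ b : V, Relation.ReflTransGen R u b →
      Relation.ReflTransGen R a b ∨ Relation.ReflTransGen R b a := by
    intro u a h
    induction h using Relation.ReflTransGen.head_induction_on with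
    | refl => intro b hb; exact Or.inl hb
    | @head a₀ c h1 h2 ih =>
      intro b hb
      rcases Relation.ReflTransGen.cases_head hb with rfl | ⟨c', h1', h2'⟩
      · exact Or.inr (Relation.ReflTransGen.head h1 h2)
      · have : c' = c := by
          have e1 : parent a₀ = some c := h1
          have e2 : parent a₀ = some c' := h1'
          rw [e1] at e2; exact (Option.some_injective V e2).symm
        exact ih b (this ▸ h2')
  have hchild_notmem : ∀ {w v : V}, parent w = some v → v ∉ desc w := by
    intro w v hw hv
    have h1 : d w ≤ d v := hd_le (hmem_desc.mp hv)
    have h2 : d v < d w := hd_step hw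
    omega
  have hdesc_sub : ∀ {w v : V}, parent w = some v → desc w ⊆ desc v := by
    intro w v hw u hu
    exact hmem_desc.mpr ((hmem_desc.mp hu).tail hw)
  have hdesc_lt : ∀ {w v : V}, parent w = some v → (desc w).card < (desc v).card := by
    intro w v hw
    apply Finset.card_lt_card
    exact (Finset.ssubset_iff_of_subset (hdesc_sub hw)).mpr ⟨v, hself v, hchild_notmem hw⟩
  have hdisj : ∀ {w₁ w₂ v : V}, parent w₁ = some v → parent w₂ = some v → w₁ ≠ w₂ →
      Disjoint (desc w₁) (desc w₂) := by
    intro w₁ w₂ v h1 h2 hne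
    rw [Finset.disjoint_left]
    intro u hu1 hu2
    have key : ∀ {a b : V}, parent a = some v → parent b = some v → a ≠ b →
        ¬ Relation.ReflTransGen R a b := by
      intro a b ha hb hab h
      rcases Relation.ReflTransGen.cases_head h with rfl | ⟨c, hc1, hc2⟩
      · exact hab rfl
      · have : c = v := by
          have e1 : parent a = some c := hc1
          rw [ha] at e1; exact (Option.some_injective V e1.symm)
        subst this
        have := hd_le hc2
        have := hd_step hb
        omega
    rcases hcomp u w₁ (hmem_desc.mp hu1) w₂ (hmem_desc.mp hu2) with h | h
    · exact key h1 h2 hne h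
    · exact key h2 h1 (Ne.symm hne) h
  -- main induction: a node of rank ≥ 2 has more than x^(rank-1) descendants
  have main : ∀ N : ℕ, ∀ v : V, (desc v).card ≤ N →
      1 ≤ rank v ∧ (2 ≤ rank v → x ^ (rank v - 1) < (desc v).card) := by
    intro N
    induction N with
    | zero => intro v hc; exact absurd hc (by have := hdesc_pos v; omega)
    | succ N ih =>
      intro v hc
      by_cases hC : ∃ w, parent w = some v
      · -- internal node
        have hrank := hinternal v hC
        set C : Finset V := Finset.univ.filter (fun w => parent w = some v) with hCdef
        have hmemC : ∀ {w : V}, w ∈ C ↔ parent w = some v := by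
          intro w; simp [hCdef]
        have hCne : C.Nonempty := ⟨hC.choose, hmemC.mpr hC.choose_spec⟩
        set s : ℕ := C.sup rank with hsdef
        set M : Finset V := Finset.univ.filter (fun w => parent w = some v ∧ rank w = s)
          with hMdef
        have hrank' : rank v = if x ≤ M.card then s + 1 else s := hrank
        have ihc : ∀ w ∈ C, 1 ≤ rank w ∧ (2 ≤ rank w → x ^ (rank w - 1) < (desc w).card) := by
          intro w hw
          have hw' : parent w = some v := hmemC.mp hw
          exact ih w (by have := hdesc_lt hw'; omega)
        have hweak : ∀ w ∈ C, x ^ (rank w - 1) ≤ (desc w).card := by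
          intro w hw
          rcases ihc w hw with ⟨h1, h2⟩
          rcases eq_or_lt_of_le h1 with h | h
          · rw [← h]; simpa using hdesc_pos w
          · exact le_of_lt (h2 h)
        have hs1 : 1 ≤ s := by
          obtain ⟨w, hw⟩ := hCne
          exact le_trans (ihc w hw).1 (Finset.le_sup hw)
        by_cases hM : x ≤ M.card
        · -- rank v = s + 1
          have hrv : rank v = s + 1 := by rw [hrank', if_pos hM]
          refine ⟨by omega, fun _ => ?_⟩
          have hMC : M ⊆ C := by
            intro w hw
            rw [hMdef, Finset.mem_filter] at hw
            exact hmemC.mpr hw.2.1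
          have hMmem : ∀ {w : V}, w ∈ M → parent w = some v ∧ rank w = s := by
            intro w hw; rw [hMdef, Finset.mem_filter] at hw; exact hw.2
          have hbi : (M.biUnion desc).card = ∑ w ∈ M, (desc w).card :=
            Finset.card_biUnion (fun w₁ h₁ w₂ h₂ hne =>
              hdisj (hMmem h₁).1 (hMmem h₂).1 hne)
          have hsub2 : M.biUnion desc ⊆ desc v \ {v} := by
            intro u hu
            rw [Finset.mem_biUnion] at hu
            obtain ⟨w, hw, hu'⟩ := hu
            rw [Finset.mem_sdiff, Finset.mem_singleton]
            refine ⟨hdesc_sub (hMmem hw).1 hu', ?_⟩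
            rintro rfl
            exact hchild_notmem (hMmem hw).1 hu'
          have hcard2 : (desc v \ {v}).card = (desc v).card - 1 := by
            rw [Finset.card_sdiff_of_subset (by simpa using hself v), Finset.card_singleton]
          have hsum_ub : ∑ w ∈ M, (desc w).card ≤ (desc v).card - 1 := by
            rw [← hbi, ← hcard2]; exact Finset.card_le_card hsub2
          have hsum_lb : x * x ^ (s - 1) ≤ ∑ w ∈ M, (desc w).card := by
            calc x * x ^ (s - 1) ≤ M.card * x ^ (s - 1) :=
                  Nat.mul_le_mul_right _ hM
              _ = M.card • x ^ (s - 1) := by rw [smul_eq_mul]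
              _ ≤ ∑ w ∈ M, (desc w).card := Finset.card_nsmul_le_sum M _ _ (fun w hw => by
                  have h := hweak w (hMC hw)
                  rwa [(hMmem hw).2] at h)
          have hpow : x ^ s = x * x ^ (s - 1) := by
            rw [← pow_succ']; congr 1; omega
          have : x ^ s < (desc v).card := by
            have := hdesc_pos v; omega
          rw [hrv]
          simpa using this
        · -- rank v = s
          have hrv : rank v = s := by rw [hrank', if_neg hM]
          refine ⟨by omega, fun h2 => ?_⟩
          obtain ⟨w, hwC, hws⟩ := Finset.exists_mem_eq_sup C hCne rank
          have hlt := (ihc w hwC).2 (by rw [← hws, ← hsdef, ← hrv]; exact h2)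
          have hsub := Finset.card_le_card (hdesc_sub (hmemC.mp hwC))
          rw [hrv, hsdef, hws] at *
          omega
      · -- leaf
        push_neg at hC
        have h1 : rank v = 1 := hleaf v hC
        exact ⟨by omega, by omega⟩
  intro v
  obtain ⟨h1, h2⟩ := main ((desc v).card) v le_rfl
  rcases Nat.lt_or_ge (rank v) 2 with h | h
  · have hr1 : rank v = 1 := by omega
    rw [hr1]
    exact Nat.clog_pos (by omega) hn
  · have hlt : x ^ (rank v - 1) < Fintype.card V :=
      lt_of_lt_of_le (h2 h) (Finset.card_le_univ _)
    have hnle : ¬ (Fintype.card V ≤ x ^ (rank v - 1)) := by omega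
    have : ¬ (Nat.clog x (Fintype.card V) ≤ rank v - 1) := fun hcl =>
      hnle ((Nat.clog_le_iff_le_pow (by omega)).mp hcl)
    omega
end

section
/- In a rooted tree ranked with threshold x = 2, any root-to-leaf path contains at most ⌈log₂ n⌉ edges (u,w) with rank(u,2) > rank(w,2), where u is the parent of w. -/
/-- In a rooted tree with `n` nodes ranked with threshold `x = 2`,
any root-to-leaf path contains at most `⌈log₂ n⌉` edges `(u, w)` (with `u` the
parent of `w`) such that `rank(u,2) > rank(w,2)`. -/
theorem rank_decreases_le_clog_two {V : Type*} [Fintype V] [DecidableEq V]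
    (parent : V → Option V) (root : V)
    (hroot : parent root = none)
    (hconn : ∀ v : V, Relation.ReflTransGen (fun a b => parent a = some b) v root)
    (rank : V → ℕ)
    (hleaf : ∀ v : V, (∀ w : V, parent w ≠ some v) → rank v = 1)
    (hinternal : ∀ v : V, (∃ w : V, parent w = some v) →
      rank v =
        if 2 ≤ (Finset.univ.filter (fun w : V => parent w = some v ∧
              rank w = (Finset.univ.filter (fun w : V => parent w = some v)).sup rank)).card
        then (Finset.univ.filter (fun w : V => parent w = some v)).sup rank + 1
        else (Finset.univ.filter (fun w : V => parent w = some v)).sup rank)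
    (hn : 2 ≤ Fintype.card V)
    -- a root-to-leaf path `p 0 = root, p 1, ..., p l` (each `p (i+1)` a child of `p i`)
    (l : ℕ) (p : ℕ → V)
    (hp0 : p 0 = root)
    (hpath : ∀ i < l, parent (p (i + 1)) = some (p i))
    (hpleaf : ∀ w : V, parent w ≠ some (p l)) :
    ((Finset.range l).filter (fun i => rank (p (i + 1)) < rank (p i))).card
      ≤ Nat.clog 2 (Fintype.card V) := by
  classical
  -- the successor function along the tree
  set g : V → V := fun v => (parent v).getD v with hgdef
  have hg : ∀ a b : V, parent a = some b → g a = b := by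
    intro a b h; simp [hgdef, h]
  have hreach : ∀ v : V, ∃ k, g^[k] v = root := by
    intro v
    induction hconn v using Relation.ReflTransGen.head_induction_on with
    | refl => exact ⟨0, rfl⟩
    | head hab _ ih =>
      obtain ⟨k, hk⟩ := ih
      exact ⟨k + 1, by rw [Function.iterate_succ_apply, hg _ _ hab, hk]⟩
  set depth : V → ℕ := fun v => Nat.find (hreach v) with hdepth
  have hdspec : ∀ v, g^[depth v] v = root := fun v => Nat.find_spec (hreach v)
  have hdstep : ∀ a b : V, parent a = some b → depth a = depth b + 1 := by
    intro a b hab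
    have hle : depth a ≤ depth b + 1 := by
      apply Nat.find_min'
      rw [Function.iterate_succ_apply, hg _ _ hab]; exact hdspec b
    have hane : a ≠ root := by
      intro h; rw [h, hroot] at hab; exact Option.some_ne_none b hab.symm
    have hpos : 0 < depth a := by
      rcases Nat.eq_zero_or_pos (depth a) with h | h
      · exfalso
        have h0 := hdspec a
        rw [h] at h0
        exact hane h0
      · exact h
    have hge : depth b + 1 ≤ depth a := by
      have hit : g^[depth a - 1] b = root := by
        have h0 := hdspec a
        rw [← Nat.sub_add_cancel hpos, Function.iterate_succ_apply, hg _ _ hab] at h0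
        exact h0
      have hb : depth b ≤ depth a - 1 := Nat.find_min' (hreach b) hit
      omega
    omega
  -- along the ancestor relation, depth decreases by the number of steps
  have hchain : ∀ u c : V, Relation.ReflTransGen (fun a b => parent a = some b) u c →
      ∃ k, g^[k] u = c ∧ depth u = depth c + k := by
    intro u c h
    induction h using Relation.ReflTransGen.head_induction_on with
    | refl => exact ⟨0, rfl, rfl⟩
    | head hab _ ih =>
      obtain ⟨k, hk, hd⟩ := ih
      refine ⟨k + 1, ?_, ?_⟩
      · rw [Function.iterate_succ_apply, hg _ _ hab, hk]
      · rw [hdstep _ _ hab, hd]; omega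
  have hdisj : ∀ c1 c2 : V, depth c1 = depth c2 → c1 ≠ c2 →
      ∀ u : V, Relation.ReflTransGen (fun a b => parent a = some b) u c1 →
           Relation.ReflTransGen (fun a b => parent a = some b) u c2 → False := by
    intro c1 c2 hd hne u h1 h2
    obtain ⟨k1, hk1, hd1⟩ := hchain u c1 h1
    obtain ⟨k2, hk2, hd2⟩ := hchain u c2 h2
    have hk : k1 = k2 := by omega
    exact hne (by rw [← hk1, hk, hk2])
  -- descendants
  set desc : V → Finset V := fun v =>
    Finset.univ.filter (fun u => Relation.ReflTransGen (fun a b => parent a = some b) u v)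
    with hdesc
  have hmemdesc : ∀ u v : V, u ∈ desc v ↔
      Relation.ReflTransGen (fun a b => parent a = some b) u v := by
    intro u v; simp [hdesc]
  have hself : ∀ v : V, v ∈ desc v := fun v => (hmemdesc v v).mpr .refl
  -- key size lemma : 2 ^ (rank v - 1) ≤ |desc v|
  have key : ∀ N : ℕ, ∀ v : V, (desc v).card ≤ N → 2 ^ (rank v - 1) ≤ (desc v).card := by
    intro N
    induction N with
    | zero =>
      intro v hv
      have := Finset.card_pos.mpr ⟨v, hself v⟩
      omega
    | succ N ih =>
      intro v hv
      by_cases hvleaf : ∀ w : V, parent w ≠ some v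
      · have h1 : rank v = 1 := hleaf v hvleaf
        have := Finset.card_pos.mpr ⟨v, hself v⟩
        rw [h1]
        simpa using this
      · push_neg at hvleaf
        obtain ⟨w0, hw0⟩ := hvleaf
        have hrv := hinternal v ⟨w0, hw0⟩
        have hsubdesc : ∀ c : V, parent c = some v → desc c ⊆ desc v := by
          intro c hc u hu
          exact (hmemdesc u v).mpr (((hmemdesc u c).mp hu).tail hc)
        have hchildcard : ∀ c : V, parent c = some v → (desc c).card ≤ N := by
          intro c hc
          have hvnot : v ∉ desc c := by
            intro hvin
            obtain ⟨k, _, hd⟩ := hchain v c ((hmemdesc v c).mp hvin)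
            have := hdstep c v hc
            omega
          have hss : desc c ⊂ desc v :=
            ⟨hsubdesc c hc, fun hsub' => hvnot (hsub' (hself v))⟩
          have := Finset.card_lt_card hss
          omega
        have hub : ∀ c : V, parent c = some v → 2 ^ (rank c - 1) ≤ (desc c).card :=
          fun c hc => ih c (hchildcard c hc)
        set M := (Finset.univ.filter (fun w : V => parent w = some v)).sup rank with hM
        by_cases hcond : 2 ≤ (Finset.univ.filter (fun w : V => parent w = some v ∧
              rank w = (Finset.univ.filter (fun w : V => parent w = some v)).sup rank)).card
        · rw [if_pos hcond] at hrv
          have h1lt : 1 < (Finset.univ.filter (fun w : V => parent w = some v ∧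
              rank w = (Finset.univ.filter (fun w : V => parent w = some v)).sup rank)).card := by
            omega
          obtain ⟨c1, hc1, c2, hc2, hne⟩ := Finset.one_lt_card.mp h1lt
          simp only [Finset.mem_filter, Finset.mem_univ, true_and] at hc1 hc2
          obtain ⟨hc1p, hc1r⟩ := hc1
          obtain ⟨hc2p, hc2r⟩ := hc2
          have hdep : depth c1 = depth c2 := by
            rw [hdstep _ _ hc1p, hdstep _ _ hc2p]
          have hdj : Disjoint (desc c1) (desc c2) := by
            rw [Finset.disjoint_left]
            intro u hu1 hu2
            exact hdisj c1 c2 hdep hne u ((hmemdesc u c1).mp hu1) ((hmemdesc u c2).mp hu2)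
          have hunion : desc c1 ∪ desc c2 ⊆ desc v :=
            Finset.union_subset (hsubdesc c1 hc1p) (hsubdesc c2 hc2p)
          have hcard : (desc c1).card + (desc c2).card ≤ (desc v).card := by
            rw [← Finset.card_union_of_disjoint hdj]
            exact Finset.card_le_card hunion
          have h1 := hub c1 hc1p
          have h2 := hub c2 hc2p
          rw [hc1r, ← hM] at h1
          rw [hc2r, ← hM] at h2
          have hpow : 2 ^ (rank v - 1) ≤ 2 ^ (M - 1) + 2 ^ (M - 1) := by
            rw [hrv]
            rcases M with _ | m
            · simp
            · rw [Nat.add_sub_cancel, Nat.succ_sub_one, pow_succ]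
              omega
          omega
        · rw [if_neg hcond] at hrv
          have hCne : (Finset.univ.filter (fun w : V => parent w = some v)).Nonempty :=
            ⟨w0, by simp [hw0]⟩
          obtain ⟨c, hc, hcr⟩ := Finset.exists_mem_eq_sup _ hCne rank
          simp only [Finset.mem_filter, Finset.mem_univ, true_and] at hc
          have h1 := hub c hc
          rw [← hcr, ← hM] at h1
          rw [hrv]
          exact h1.trans (Finset.card_le_card (hsubdesc c hc))
  have hkey : ∀ v : V, 2 ^ (rank v - 1) ≤ (desc v).card := fun v => key _ v le_rfl
  have hdescroot : (desc root).card = Fintype.card V := by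
    have h1 : desc root = Finset.univ := by
      apply Finset.eq_univ_iff_forall.mpr
      intro u
      exact (hmemdesc u root).mpr (hconn u)
    rw [h1, Finset.card_univ]
  -- rank is monotone along edges
  have hmono : ∀ a b : V, parent a = some b → rank a ≤ rank b := by
    intro a b hab
    have hrb := hinternal b ⟨a, hab⟩
    have hle : rank a ≤ (Finset.univ.filter (fun w : V => parent w = some b)).sup rank :=
      Finset.le_sup (by simp [hab])
    split_ifs at hrb <;> omega
  -- counting decreases along the path
  have hcount : ∀ j, j ≤ l →
      rank (p j) + ((Finset.range j).filter (fun i => rank (p (i + 1)) < rank (p i))).card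
        ≤ rank (p 0) := by
    intro j
    induction j with
    | zero => simp
    | succ j ih =>
      intro hjl
      have ihj := ih (by omega)
      have hedge := hpath j (by omega)
      have hmle : rank (p (j + 1)) ≤ rank (p j) := hmono _ _ hedge
      rw [Finset.range_add_one, Finset.filter_insert]
      by_cases hd : rank (p (j + 1)) < rank (p j)
      · rw [if_pos hd, Finset.card_insert_of_notMem (by simp)]
        omega
      · rw [if_neg hd]
        omega
  have hrl : rank (p l) = 1 := hleaf _ hpleaf
  have hk := hcount l le_rfl
  rw [hp0, hrl] at hk
  have h2k : 2 ^ ((Finset.range l).filter (fun i => rank (p (i + 1)) < rank (p i))).card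
      ≤ Fintype.card V := by
    calc 2 ^ ((Finset.range l).filter (fun i => rank (p (i + 1)) < rank (p i))).card
        ≤ 2 ^ (rank root - 1) := Nat.pow_le_pow_right (by norm_num) (by omega)
      _ ≤ (desc root).card := hkey root
      _ = Fintype.card V := hdescroot
  have hle2 : (2:ℕ) ^ ((Finset.range l).filter (fun i => rank (p (i + 1)) < rank (p i))).card
      ≤ 2 ^ Nat.clog 2 (Fintype.card V) :=
    h2k.trans (Nat.le_pow_clog one_lt_two _)
  exact (Nat.pow_le_pow_iff_right one_lt_two).mp hle2
end

section
/- In the Decay algorithm, if a listening node v has at least one informed neighbor at the start of a phase, and among v's neighbors exactly d ≥ 1 are informed, then during the round i of the phase in which 2^{i-1} ≤ d ≤ 2^i, the probability that exactly one informed neighbor of v transmits (each transmitting independently with probability 2^{-i}) is at least a positive constant (e.g., at least 1/(2e)). -/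
/-- In the Decay algorithm, if a listening node `v` has `d ≥ 1` informed
neighbors, then in the round `i` of the phase with `2^(i-1) ≤ d ≤ 2^i` (each informed
neighbor transmitting independently with probability `2^(-i)`), the probability that
exactly one informed neighbor transmits, namely `d · 2^(-i) · (1 - 2^(-i))^(d-1)`,
is at least the positive constant `1/(2e)`. -/
theorem decay_round_success_prob (d i : ℕ) (hd : 1 ≤ d) (hi : 1 ≤ i)
    (hlow : 2 ^ (i - 1) ≤ d) (hhigh : d ≤ 2 ^ i) :
    (1 : ℝ) / (2 * Real.exp 1) ≤
      (d : ℝ) * (2 : ℝ) ^ (-(i : ℤ)) * (1 - (2 : ℝ) ^ (-(i : ℤ))) ^ (d - 1) := by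
  set N := 2 ^ i with hN
  have hN2 : 2 ≤ N := by
    calc 2 = 2 ^ 1 := rfl
    _ ≤ 2 ^ i := Nat.pow_le_pow_right (by norm_num) hi
  have hnpos : (0 : ℝ) < N := by positivity
  have hn2 : (2 : ℝ) ≤ (N : ℝ) := by exact_mod_cast hN2
  have hp : (2 : ℝ) ^ (-(i : ℤ)) = 1 / (N : ℝ) := by
    rw [zpow_neg, zpow_natCast, one_div]
    congr 1
    push_cast [hN]
    ring
  rw [hp]
  have ha0 : (0 : ℝ) ≤ 1 - 1 / (N : ℝ) := by
    rw [sub_nonneg, div_le_one hnpos]; linarith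
  have ha1 : 1 - 1 / (N : ℝ) ≤ 1 := by
    have : (0 : ℝ) ≤ 1 / (N : ℝ) := by positivity
    linarith
  have hNm1 : (0 : ℝ) < (N : ℝ) - 1 := by linarith
  -- Step A : exp(-1) ≤ (1 - 1/N)^(N-1)
  have hA : Real.exp (-1) ≤ (1 - 1 / (N : ℝ)) ^ (N - 1) := by
    have hkey : Real.exp (-(1 / ((N : ℝ) - 1))) ≤ 1 - 1 / (N : ℝ) := by
      have h1 : 1 / ((N : ℝ) - 1) + 1 ≤ Real.exp (1 / ((N : ℝ) - 1)) :=
        Real.add_one_le_exp _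
      have h2 : 1 / ((N : ℝ) - 1) + 1 = (N : ℝ) / ((N : ℝ) - 1) := by
        field_simp
        ring
      rw [Real.exp_neg]
      have hapos : (0:ℝ) < 1 - 1 / (N : ℝ) := by
        rw [sub_pos, div_lt_one hnpos]; linarith
      rw [inv_le_comm₀ (Real.exp_pos _) hapos]
      have h3 : (1 - 1 / (N : ℝ))⁻¹ = (N : ℝ) / ((N : ℝ) - 1) := by
        rw [eq_div_iff (by linarith)]
        field_simp
      rw [h3]
      linarith [h1, h2]
    have hpow : Real.exp (-(1 / ((N : ℝ) - 1))) ^ (N - 1)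
        ≤ (1 - 1 / (N : ℝ)) ^ (N - 1) :=
      pow_le_pow_left₀ (Real.exp_pos _).le hkey _
    refine le_trans (le_of_eq ?_) hpow
    rw [← Real.exp_nat_mul]
    congr 1
    have hcast : ((N - 1 : ℕ) : ℝ) = (N : ℝ) - 1 := by
      have : 1 ≤ N := by omega
      push_cast [this]; ring
    rw [hcast]
    field_simp
  -- Step B : (1 - 1/N)^(N-1) ≤ (1 - 1/N)^(d-1)
  have hB : (1 - 1 / (N : ℝ)) ^ (N - 1) ≤ (1 - 1 / (N : ℝ)) ^ (d - 1) :=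
    pow_le_pow_of_le_one ha0 ha1 (Nat.sub_le_sub_right hhigh 1)
  -- Step C : 1/2 ≤ d / N
  have hC : (1 : ℝ) / 2 ≤ (d : ℝ) * (1 / (N : ℝ)) := by
    have hNd : N ≤ 2 * d := by
      have : N = 2 * 2 ^ (i - 1) := by
        rw [hN]
        conv_lhs => rw [show i = (i - 1) + 1 by omega]
        rw [pow_succ]
        ring
      omega
    have hNd' : (N : ℝ) ≤ 2 * d := by exact_mod_cast hNd
    rw [mul_one_div, div_le_div_iff₀ (by norm_num) hnpos]
    linarith
  have hexp : Real.exp (-1) ≤ (1 - 1 / (N : ℝ)) ^ (d - 1) := hA.trans hB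
  have hfin : (1 : ℝ) / 2 * Real.exp (-1) ≤
      (d : ℝ) * (1 / (N : ℝ)) * (1 - 1 / (N : ℝ)) ^ (d - 1) :=
    mul_le_mul hC hexp (Real.exp_pos _).le (by positivity)
  refine le_trans (le_of_eq ?_) hfin
  rw [Real.exp_neg]
  field_simp
end

section
/- In a bipartite graph where one side A consists of informed nodes and the other side B of uninformed nodes, one phase of the Decay algorithm (O(log n) rounds, where in round i each node of A transmits independently with probability 2^{-i}) informs any fixed node of B that has at least one neighbor in A with probability at least a positive constant. -/
lemma decay_aux_le_one (d : ℕ) (hd : 1 ≤ d) (x : ℝ) (hx0 : 0 ≤ x) (hx1 : x ≤ 1) :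
    (d : ℝ) * x * (1 - x) ^ (d - 1) ≤ 1 := by
  have hdc : ((d - 1 : ℕ) : ℝ) = (d : ℝ) - 1 := by
    rw [Nat.cast_sub hd]; norm_num
  have h1 : 1 + ((d - 1 : ℕ) : ℝ) * x ≤ (1 + x) ^ (d - 1) :=
    one_add_mul_le_pow (by linarith) (d - 1)
  have h2 : (0 : ℝ) ≤ 1 - x := by linarith
  have h3 : (1 - x) ^ (d - 1) * (1 + x) ^ (d - 1) ≤ 1 := by
    rw [← mul_pow]
    exact pow_le_one₀ (by nlinarith) (by nlinarith)
  have h4 : (d : ℝ) * x ≤ 1 + ((d - 1 : ℕ) : ℝ) * x := by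
    rw [hdc]; nlinarith
  calc (d : ℝ) * x * (1 - x) ^ (d - 1)
      ≤ (1 + ((d - 1 : ℕ) : ℝ) * x) * (1 - x) ^ (d - 1) :=
        mul_le_mul_of_nonneg_right h4 (pow_nonneg h2 _)
    _ ≤ (1 + x) ^ (d - 1) * (1 - x) ^ (d - 1) :=
        mul_le_mul_of_nonneg_right h1 (pow_nonneg h2 _)
    _ ≤ 1 := by rw [mul_comm]; exact h3

theorem decay_phase_success : ∃ c : ℝ, 0 < c ∧
    ∀ n d : ℕ, 1 ≤ d → d ≤ n →
      c ≤ 1 - ∏ i ∈ Finset.Icc 1 (Nat.clog 2 n + 1),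
        (1 - (d : ℝ) * (2 : ℝ) ^ (-(i : ℤ)) * (1 - (2 : ℝ) ^ (-(i : ℤ))) ^ (d - 1)) := by
  refine ⟨1/8, by norm_num, ?_⟩
  intro n d hd hdn
  set f : ℕ → ℝ := fun i =>
    1 - (d : ℝ) * (2 : ℝ) ^ (-(i : ℤ)) * (1 - (2 : ℝ) ^ (-(i : ℤ))) ^ (d - 1) with hf
  set m : ℕ := Nat.clog 2 d with hm
  set i0 : ℕ := m + 1 with hi0
  have hxval : ∀ i : ℕ, (2 : ℝ) ^ (-(i : ℤ)) = ((2 : ℝ) ^ i)⁻¹ := by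
    intro i; rw [zpow_neg, zpow_natCast]
  have hxpos : ∀ i : ℕ, (0 : ℝ) < (2 : ℝ) ^ (-(i : ℤ)) := by
    intro i; rw [hxval]; positivity
  have hxle : ∀ i : ℕ, 1 ≤ i → (2 : ℝ) ^ (-(i : ℤ)) ≤ 1/2 := by
    intro i hi
    rw [hxval]
    rw [inv_le_comm₀ (by positivity) (by norm_num)]
    norm_num
    calc (2:ℝ) = 2^1 := by norm_num
      _ ≤ 2^i := by apply pow_le_pow_right₀ (by norm_num) hi
  -- membership
  have hi0mem : i0 ∈ Finset.Icc 1 (Nat.clog 2 n + 1) := by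
    simp only [Finset.mem_Icc]
    constructor
    · omega
    · have := Nat.clog_mono_right 2 hdn
      omega
  -- bounds on d vs 2^m
  have hdle : (d : ℕ) ≤ 2 ^ m := Nat.le_pow_clog (by norm_num) d
  have hlt : 2 ^ m < 2 * d := by
    rcases Nat.eq_or_lt_of_le hd with h1 | h1
    · simp [hm, ← h1, Nat.clog_one_right]
    · have hmp : 1 ≤ m := by
        rw [hm]
        exact Nat.clog_pos (by norm_num) h1
      have := Nat.pow_pred_clog_lt_self (b := 2) (by norm_num) h1
      have h2 : 2 ^ (m - 1) < d := by simpa [hm, Nat.pred_eq_sub_one] using this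
      calc 2 ^ m = 2 * 2 ^ (m - 1) := by
            rw [← pow_succ']
            congr 1
            omega
        _ < 2 * d := by omega
  -- real versions
  set x0 : ℝ := (2 : ℝ) ^ (-(i0 : ℤ)) with hx0def
  have hx0eq : x0 = ((2 : ℝ) ^ i0)⁻¹ := hxval i0
  have h2i0 : (2 : ℝ) ^ i0 = 2 * 2 ^ m := by rw [hi0, pow_succ]; ring
  have hx0pos : 0 < x0 := hxpos i0
  have hdR : (1 : ℝ) ≤ (d : ℝ) := by exact_mod_cast hd
  have h2mpos : (0:ℝ) < 2 ^ m := by positivity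
  have hdle' : (d : ℝ) ≤ 2 ^ m := by exact_mod_cast hdle
  have hlt' : (2 : ℝ) ^ m < 2 * d := by exact_mod_cast hlt
  have hdx_le : (d : ℝ) * x0 ≤ 1/2 := by
    rw [hx0eq, h2i0]
    rw [mul_inv_le_iff₀ (by positivity)]
    nlinarith
  have hdx_ge : (1/4 : ℝ) ≤ (d : ℝ) * x0 := by
    rw [hx0eq, h2i0]
    rw [le_mul_inv_iff₀ (by positivity)]
    nlinarith
  -- Bernoulli lower bound on (1 - x0)^(d-1)
  have hber : (1/2 : ℝ) ≤ (1 - x0) ^ (d - 1) := by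
    have h1 : 1 + ((d - 1 : ℕ) : ℝ) * (-x0) ≤ (1 + (-x0)) ^ (d - 1) :=
      one_add_mul_le_pow (by nlinarith) (d - 1)
    have hdc : ((d - 1 : ℕ) : ℝ) = (d : ℝ) - 1 := by
      rw [Nat.cast_sub hd]; norm_num
    have h2 : ((d - 1 : ℕ) : ℝ) * x0 ≤ 1/2 := by
      rw [hdc]
      nlinarith
    calc (1/2 : ℝ) ≤ 1 + ((d - 1 : ℕ) : ℝ) * (-x0) := by nlinarith
      _ ≤ (1 + (-x0)) ^ (d - 1) := h1
      _ = (1 - x0) ^ (d - 1) := by ring_nf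
  have hprod18 : (1/8 : ℝ) ≤ (d : ℝ) * x0 * (1 - x0) ^ (d - 1) := by
    calc (1/8 : ℝ) = (1/4) * (1/2) := by norm_num
      _ ≤ ((d : ℝ) * x0) * ((1 - x0) ^ (d - 1)) := by
          apply mul_le_mul hdx_ge hber (by norm_num) (by linarith)
  have hfi0eq : f i0 = 1 - (d : ℝ) * x0 * (1 - x0) ^ (d - 1) := by
    simp only [hf, hx0def]
  have hfi0 : f i0 ≤ 7/8 := by rw [hfi0eq]; linarith
  have hber1 : (1 - x0) ^ (d - 1) ≤ 1 :=
    pow_le_one₀ (by nlinarith) (by nlinarith)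
  have hfi0nn : 0 ≤ f i0 := by
    rw [hfi0eq]
    nlinarith [mul_le_mul_of_nonneg_left hber1 (le_of_lt (by positivity : (0:ℝ) < (d:ℝ) * x0))]
  -- generic bounds on f j for j ≥ 1
  have hfnn : ∀ j ∈ Finset.Icc 1 (Nat.clog 2 n + 1), 0 ≤ f j := by
    intro j hj
    have hj1 : 1 ≤ j := (Finset.mem_Icc.mp hj).1
    have hxj := hxpos j
    have hxjle := hxle j hj1
    simp only [hf, sub_nonneg]
    exact decay_aux_le_one d hd _ (le_of_lt hxj) (by linarith)
  have hfle1 : ∀ j ∈ Finset.Icc 1 (Nat.clog 2 n + 1), f j ≤ 1 := by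
    intro j hj
    have hj1 : 1 ≤ j := (Finset.mem_Icc.mp hj).1
    have hxj := hxpos j
    have hxjle := hxle j hj1
    simp only [hf]
    have : (0:ℝ) ≤ (d : ℝ) * (2 : ℝ) ^ (-(j : ℤ)) * (1 - (2 : ℝ) ^ (-(j : ℤ))) ^ (d - 1) := by
      apply mul_nonneg (by positivity)
      apply pow_nonneg
      linarith
    linarith
  have hsplit := Finset.mul_prod_erase (Finset.Icc 1 (Nat.clog 2 n + 1)) f hi0mem
  have hrest : ∏ j ∈ (Finset.Icc 1 (Nat.clog 2 n + 1)).erase i0, f j ≤ 1 := by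
    apply Finset.prod_le_one
    · intro j hj; exact hfnn j (Finset.mem_of_mem_erase hj)
    · intro j hj; exact hfle1 j (Finset.mem_of_mem_erase hj)
  have hrestnn : 0 ≤ ∏ j ∈ (Finset.Icc 1 (Nat.clog 2 n + 1)).erase i0, f j :=
    Finset.prod_nonneg fun j hj => hfnn j (Finset.mem_of_mem_erase hj)
  have hprodle : ∏ j ∈ Finset.Icc 1 (Nat.clog 2 n + 1), f j ≤ 7/8 := by
    rw [← hsplit]
    calc f i0 * ∏ j ∈ (Finset.Icc 1 (Nat.clog 2 n + 1)).erase i0, f j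
        ≤ f i0 * 1 := mul_le_mul_of_nonneg_left hrest hfi0nn
      _ = f i0 := mul_one _
      _ ≤ 7/8 := hfi0
  linarith [hprodle]
end

section
/- Path decomposition count: any root-to-leaf path in a SGST decomposes into at most r_max^{[2]} fast segments, at most r_max^{[2]} slow edges, and at most r_max^{[x]} super-slow edges, where r_max^{[2]} ≤ ⌈log₂ n⌉ and r_max^{[x]} ≤ ⌈log_x n⌉; consequently, with x = log n, the number of super-slow edges is O(log n / log log n). -/
private lemma count_strict_decr (f : ℕ → ℕ) :
    ∀ l : ℕ, (∀ i < l, f (i + 1) ≤ f i) →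
      ((Finset.range l).filter (fun i => f (i + 1) < f i)).card + f l ≤ f 0 := by
  intro l
  induction l with
  | zero => simp
  | succ l ih =>
    intro h
    have ihl := ih (fun i hi => h i (by omega))
    have hl := h l (by omega)
    rw [Finset.range_add_one, Finset.filter_insert]
    by_cases hd : f (l + 1) < f l
    · rw [if_pos hd, Finset.card_insert_of_notMem (by simp)]
      omega
    · rw [if_neg hd]
      omega


open Finset in
private lemma sgst_rank_bound {V : Type*} [Fintype V] [DecidableEq V]
    (parent : V → Option V) (root : V)
    (hroot : parent root = none)
    (hconn : ∀ v : V, Relation.ReflTransGen (fun a b => parent a = some b) v root)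
    (t : ℕ) (ht : 2 ≤ t)
    (rank : V → ℕ)
    (hleaf : ∀ v : V, (∀ w : V, parent w ≠ some v) → rank v = 1)
    (hinternal : ∀ v : V, (∃ w : V, parent w = some v) →
      rank v =
        if t ≤ (Finset.univ.filter (fun w : V => parent w = some v ∧
              rank w = (Finset.univ.filter (fun w : V => parent w = some v)).sup rank)).card
        then (Finset.univ.filter (fun w : V => parent w = some v)).sup rank + 1
        else (Finset.univ.filter (fun w : V => parent w = some v)).sup rank)
    (hn : 2 ≤ Fintype.card V) :
    (∀ w v : V, parent w = some v → rank w ≤ rank v) ∧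
      rank root ≤ Nat.clog t (Fintype.card V) := by
  classical
  set N := Fintype.card V with hN
  -- iteration of parent on options
  set F : Option V → Option V := fun o => o.bind parent with hF
  have hFnone : ∀ k : ℕ, F^[k] none = none := by
    intro k; induction k with
    | zero => rfl
    | succ k ih => rw [Function.iterate_succ_apply, show F none = none from rfl, ih]
  have hex : ∀ v : V, ∃ n : ℕ, F^[n] (some v) = some root := by
    intro v
    induction hconn v using Relation.ReflTransGen.head_induction_on with
    | refl => exact ⟨0, rfl⟩
    | head h _ ih =>
      obtain ⟨n, hn'⟩ := ih
      exact ⟨n + 1, by rw [Function.iterate_succ_apply]; simpa [hF, h] using hn'⟩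
  set d : V → ℕ := fun v => Nat.find (hex v) with hd
  have hdspec : ∀ v : V, F^[d v] (some v) = some root := fun v => Nat.find_spec (hex v)
  have hdmin : ∀ v : V, ∀ m < d v, F^[m] (some v) ≠ some root := fun v m hm => Nat.find_min (hex v) hm
  -- intermediate iterates are some
  have hsome : ∀ (v : V) (i : ℕ), i ≤ d v → ∃ u : V, F^[i] (some v) = some u := by
    intro v i hi
    rcases h : F^[i] (some v) with _ | u
    · exfalso
      have : F^[d v] (some v) = none := by
        have : F^[(d v - i) + i] (some v) = none := by
          rw [Function.iterate_add_apply, h, hFnone]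
        rwa [Nat.sub_add_cancel hi] at this
      rw [hdspec v] at this; exact nomatch this
    · exact ⟨u, rfl⟩
  -- depth bound
  have hdlt : ∀ v : V, d v < N := by
    intro v
    have hinj : Set.InjOn (fun i => F^[i] (some v)) (Finset.range (d v + 1)) := by
      intro i hi j hj hij
      simp only [Finset.coe_range, Set.mem_Iio, Finset.mem_coe, Finset.mem_range] at hi hj
      simp only at hij
      have contra : ∀ a b : ℕ, a < b → b < d v + 1 →
          F^[a] (some v) = F^[b] (some v) → False := by
        intro a b hab hb heq
        have key : F^[(d v - b) + a] (some v) = some root := by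
          have h0 := hdspec v
          rw [show d v = (d v - b) + b by omega, Function.iterate_add_apply, ← heq,
            ← Function.iterate_add_apply] at h0
          exact h0
        exact hdmin v ((d v - b) + a) (by omega) key
      rcases Nat.lt_trichotomy i j with hlt | heq | hgt
      · exact absurd (contra i j hlt hj hij) not_false
      · exact heq
      · exact absurd (contra j i hgt hi hij.symm) not_false
    have hmaps : ∀ i ∈ Finset.range (d v + 1), F^[i] (some v) ∈
        (Finset.univ : Finset V).image some := by
      intro i hi
      obtain ⟨u, hu⟩ := hsome v i (Nat.lt_succ_iff.mp (Finset.mem_range.mp hi))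
      simp only [hu]; exact Finset.mem_image_of_mem some (Finset.mem_univ u)
    have := Finset.card_le_card_of_injOn _ hmaps hinj
    rw [Finset.card_range, Finset.card_image_of_injective _ (Option.some_injective V),
      Finset.card_univ] at this
    omega
  -- depth of child
  have hdchild : ∀ w v : V, parent w = some v → d w = d v + 1 := by
    intro w v h
    have hwr : w ≠ root := by rintro rfl; rw [hroot] at h; exact nomatch h
    have h1 : ∀ n : ℕ, F^[n + 1] (some w) = F^[n] (some v) := by
      intro n
      have hfw : F (some w) = some v := by simpa [hF] using h
      rw [Function.iterate_succ_apply, hfw]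
    have hle : d w ≤ d v + 1 := Nat.find_le (by rw [h1]; exact hdspec v)
    have hpos : 0 < d w := by
      rcases Nat.eq_zero_or_pos (d w) with h0 | h0
      · exfalso; have := hdspec w; rw [h0] at this
        exact hwr (Option.some_injective V this)
      · exact h0
    have hge : d v ≤ d w - 1 := by
      apply Nat.find_le
      have := hdspec w
      rw [show d w = (d w - 1) + 1 by omega, h1] at this
      exact this
    omega
  -- child induction principle
  have child_ind : ∀ (P : V → Prop),
      (∀ v : V, (∀ w : V, parent w = some v → P w) → P v) → ∀ v : V, P v := by
    intro P ih
    have key : ∀ (n : ℕ) (v : V), N - d v ≤ n → P v := by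
      intro n
      induction n with
      | zero => intro v hv; exact absurd hv (by have := hdlt v; omega)
      | succ n IH =>
        intro v hv
        apply ih
        intro w hw
        apply IH
        have := hdchild w v hw
        have := hdlt v
        omega
    exact fun v => key N v (by omega)
  -- step relation and descendants
  set step : V → V → Prop := fun a b => parent a = some b with hstep
  have hd_of_rtg : ∀ u v : V, Relation.ReflTransGen step u v → d v ≤ d u := by
    intro u v h
    induction h using Relation.ReflTransGen.head_induction_on with
    | refl => exact le_refl _
    | head h' _ ih =>
      rename_i a c _
      have := hdchild a c h'
      omega
  have heq_of_rtg : ∀ u v : V, Relation.ReflTransGen step u v → d u = d v → u = v := by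
    intro u v h hduv
    rcases h.cases_head with rfl | ⟨c, hc, hcv⟩
    · rfl
    · have h1 := hdchild u c hc
      have h2 := hd_of_rtg c v hcv
      omega
  have hkey : ∀ a b u : V, Relation.ReflTransGen step u a → d a = d b →
      Relation.ReflTransGen step u b → a = b := by
    intro a b u h
    induction h using Relation.ReflTransGen.head_induction_on with
    | refl => intro hdab hub; exact heq_of_rtg a b hub hdab
    | head h' hrt ih =>
      rename_i u' c
      intro hdab hub
      rcases hub.cases_head with rfl | ⟨c', hc', hc'b⟩
      · exfalso
        have h1 := hdchild u' c h'
        have h2 := hd_of_rtg c a hrt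
        omega
      · have : c' = c := by
          have := h'.symm.trans hc'
          exact (Option.some_injective V this).symm
        subst this
        exact ih hdab hc'b
  set desc : V → Finset V := fun v =>
    Finset.univ.filter (fun u => Relation.ReflTransGen step u v) with hdesc
  have hdesc_self : ∀ v : V, v ∈ desc v := fun v =>
    Finset.mem_filter.mpr ⟨Finset.mem_univ v, Relation.ReflTransGen.refl⟩
  have hdesc_mono : ∀ w v : V, parent w = some v → desc w ⊆ desc v := by
    intro w v h u hu
    rw [hdesc] at hu ⊢
    rw [Finset.mem_filter] at hu ⊢
    exact ⟨hu.1, hu.2.tail h⟩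
  have hdesc_notmem : ∀ w v : V, parent w = some v → v ∉ desc w := by
    intro w v h hv
    rw [hdesc, Finset.mem_filter] at hv
    have h1 := hd_of_rtg v w hv.2
    have h2 := hdchild w v h
    omega
  have hdesc_disj : ∀ w₁ w₂ v : V, parent w₁ = some v → parent w₂ = some v →
      w₁ ≠ w₂ → Disjoint (desc w₁) (desc w₂) := by
    intro w₁ w₂ v h1 h2 hne
    rw [Finset.disjoint_left]
    intro u hu1 hu2
    rw [hdesc, Finset.mem_filter] at hu1 hu2
    exact hne (hkey w₁ w₂ u hu1.2
      (by rw [hdchild w₁ v h1, hdchild w₂ v h2]) hu2.2)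
  -- children set
  set C : V → Finset V := fun v => Finset.univ.filter (fun w => parent w = some v) with hC
  have hCmem : ∀ w v : V, w ∈ C v ↔ parent w = some v := by
    intro w v; rw [hC]; simp
  have hsize : ∀ v : V, 1 + ∑ w ∈ C v, (desc w).card ≤ (desc v).card := by
    intro v
    have hdisj : ∀ w₁ ∈ C v, ∀ w₂ ∈ C v, w₁ ≠ w₂ → Disjoint (desc w₁) (desc w₂) := by
      intro w₁ h1 w₂ h2 hne
      exact hdesc_disj w₁ w₂ v ((hCmem w₁ v).mp h1) ((hCmem w₂ v).mp h2) hne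
    have hcardbi : ((C v).biUnion desc).card = ∑ w ∈ C v, (desc w).card :=
      Finset.card_biUnion hdisj
    have hsub : insert v ((C v).biUnion desc) ⊆ desc v := by
      intro u hu
      rcases Finset.mem_insert.mp hu with rfl | hu
      · exact hdesc_self u
      · obtain ⟨w, hw, hu⟩ := Finset.mem_biUnion.mp hu
        exact hdesc_mono w v ((hCmem w v).mp hw) hu
    have hvnot : v ∉ (C v).biUnion desc := by
      intro hv
      obtain ⟨w, hw, hv⟩ := Finset.mem_biUnion.mp hv
      exact hdesc_notmem w v ((hCmem w v).mp hw) hv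
    calc 1 + ∑ w ∈ C v, (desc w).card = (insert v ((C v).biUnion desc)).card := by
          rw [Finset.card_insert_of_notMem hvnot, hcardbi]; omega
      _ ≤ (desc v).card := Finset.card_le_card hsub
  -- rank facts
  have hrank_le : ∀ w v : V, parent w = some v → rank w ≤ rank v := by
    intro w v h
    have h1 : rank w ≤ (Finset.univ.filter (fun w : V => parent w = some v)).sup rank :=
      Finset.le_sup (Finset.mem_filter.mpr ⟨Finset.mem_univ w, h⟩)
    rw [hinternal v ⟨w, h⟩]
    split <;> omega
  have hrank_pos : ∀ v : V, 1 ≤ rank v := by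
    apply child_ind
    intro v ih
    by_cases hc : ∃ w : V, parent w = some v
    · obtain ⟨w, hw⟩ := hc
      exact le_trans (ih w hw) (hrank_le w v hw)
    · push_neg at hc
      rw [hleaf v hc]
  have hmain : ∀ v : V, t ^ (rank v - 1) ≤ (desc v).card ∧
      (2 ≤ rank v → t ^ (rank v - 1) < (desc v).card) := by
    apply child_ind
    intro v ih
    by_cases hc : ∃ w : V, parent w = some v
    · have hCne : (C v).Nonempty := by
        obtain ⟨w, hw⟩ := hc; exact ⟨w, (hCmem w v).mpr hw⟩
      obtain ⟨w0, hw0mem, hw0⟩ := Finset.exists_mem_eq_sup (C v) hCne rank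
      have hw0p : parent w0 = some v := (hCmem w0 v).mp hw0mem
      have hs1 : 1 ≤ (C v).sup rank := hw0 ▸ hrank_pos w0
      have hCeq : Finset.univ.filter (fun w : V => parent w = some v) = C v := rfl
      rw [hinternal v hc, hCeq]
      set s := (C v).sup rank with hsdef
      split
      · rename_i hcase
        -- many children of max rank
        set T := Finset.univ.filter (fun w : V => parent w = some v ∧ rank w = s) with hT
        have hTsub : T ⊆ C v := by
          intro w hw
          rw [hT, Finset.mem_filter] at hw
          exact (hCmem w v).mpr hw.2.1
        have hTlow : ∀ w ∈ T, t ^ (s - 1) ≤ (desc w).card := by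
          intro w hw
          rw [hT, Finset.mem_filter] at hw
          have := (ih w hw.2.1).1
          rwa [hw.2.2] at this
        have hsum : T.card * t ^ (s - 1) ≤ ∑ w ∈ T, (desc w).card := by
          simpa using Finset.card_nsmul_le_sum T (fun w => (desc w).card) (t ^ (s-1)) hTlow
        have hsum2 : ∑ w ∈ T, (desc w).card ≤ ∑ w ∈ C v, (desc w).card :=
          Finset.sum_le_sum_of_subset hTsub
        have hts : t * t ^ (s - 1) = t ^ s := by
          rw [← pow_succ']
          congr 1
          omega
        have htT : t * t ^ (s - 1) ≤ T.card * t ^ (s - 1) :=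
          Nat.mul_le_mul_right _ hcase
        have hfin : t ^ s < (desc v).card := by
          have := hsize v
          omega
        constructor
        · simpa using hfin.le
        · intro _; simpa using hfin
      · -- few children of max rank
        have hih := ih w0 hw0p
        have hsub : (desc w0).card ≤ (desc v).card :=
          Finset.card_le_card (hdesc_mono w0 v hw0p)
        constructor
        · have h1 := hih.1
          rw [← hw0] at h1
          omega
        · intro h2
          have h3 := hih.2 (hw0 ▸ h2)
          rw [← hw0] at h3
          omega
    · push_neg at hc
      rw [hleaf v hc]
      have : 1 ≤ (desc v).card := Finset.card_pos.mpr ⟨v, hdesc_self v⟩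
      constructor
      · simpa using this
      · omega
  refine ⟨hrank_le, ?_⟩
  rcases Nat.lt_or_ge (rank root) 2 with h2 | h2
  · have : 0 < Nat.clog t N := Nat.clog_pos (by omega) (by omega)
    omega
  · have h3 := (hmain root).2 h2
    have h4 : (desc root).card ≤ N := by
      rw [hN, ← Finset.card_univ]
      exact Finset.card_le_card (Finset.subset_univ _)
    have h5 : N ≤ t ^ Nat.clog t N := Nat.le_pow_clog (by omega) N
    have h6 : t ^ (rank root - 1) < t ^ Nat.clog t N := by omega
    have h7 : rank root - 1 < Nat.clog t N :=
      (Nat.pow_lt_pow_iff_right (by omega)).mp h6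
    omega



/-- Path decomposition count in a SGST: consider a rooted spanning tree
on `n` nodes ranked both with threshold `2` (giving `rank2`) and with threshold `x`
(giving `rankx`). Along any root-to-leaf path:
* the number of (maximal) fast segments — runs of edges with `rank2(parent) = rank2(child)` —
  is at most `⌈log₂ n⌉`;
* the number of slow edges (`rank2(parent) > rank2(child)` but `rankx(parent) = rankx(child)`)
  is at most `⌈log₂ n⌉`;
* the number of super-slow edges (`rankx(parent) > rankx(child)`) is at most `⌈log_x n⌉`. -/
theorem sgst_path_decomposition {V : Type*} [Fintype V] [DecidableEq V]
    (parent : V → Option V) (root : V)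
    (hroot : parent root = none)
    (hconn : ∀ v : V, Relation.ReflTransGen (fun a b => parent a = some b) v root)
    (x : ℕ) (hx : 2 ≤ x)
    (rank2 rankx : V → ℕ)
    (hleaf2 : ∀ v : V, (∀ w : V, parent w ≠ some v) → rank2 v = 1)
    (hinternal2 : ∀ v : V, (∃ w : V, parent w = some v) →
      rank2 v =
        if 2 ≤ (Finset.univ.filter (fun w : V => parent w = some v ∧
              rank2 w = (Finset.univ.filter (fun w : V => parent w = some v)).sup rank2)).card
        then (Finset.univ.filter (fun w : V => parent w = some v)).sup rank2 + 1
        else (Finset.univ.filter (fun w : V => parent w = some v)).sup rank2)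
    (hleafx : ∀ v : V, (∀ w : V, parent w ≠ some v) → rankx v = 1)
    (hinternalx : ∀ v : V, (∃ w : V, parent w = some v) →
      rankx v =
        if x ≤ (Finset.univ.filter (fun w : V => parent w = some v ∧
              rankx w = (Finset.univ.filter (fun w : V => parent w = some v)).sup rankx)).card
        then (Finset.univ.filter (fun w : V => parent w = some v)).sup rankx + 1
        else (Finset.univ.filter (fun w : V => parent w = some v)).sup rankx)
    (hn : 2 ≤ Fintype.card V)
    -- a root-to-leaf path `p 0 = root, p 1, ..., p l`
    (l : ℕ) (p : ℕ → V)
    (hp0 : p 0 = root)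
    (hpath : ∀ i < l, parent (p (i + 1)) = some (p i))
    (hpleaf : ∀ w : V, parent w ≠ some (p l)) :
    -- number of maximal fast segments (a fast edge starting a run)
    ((Finset.range l).filter (fun i => rank2 (p (i + 1)) = rank2 (p i) ∧
        (i = 0 ∨ ¬ rank2 (p i) = rank2 (p (i - 1))))).card
      ≤ Nat.clog 2 (Fintype.card V) ∧
    -- number of slow edges
    ((Finset.range l).filter (fun i => rank2 (p (i + 1)) < rank2 (p i) ∧
        rankx (p (i + 1)) = rankx (p i))).card
      ≤ Nat.clog 2 (Fintype.card V) ∧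
    -- number of super-slow edges
    ((Finset.range l).filter (fun i => rankx (p (i + 1)) < rankx (p i))).card
      ≤ Nat.clog x (Fintype.card V) := by
  classical
  obtain ⟨hle2, hb2⟩ := sgst_rank_bound parent root hroot hconn 2 le_rfl rank2
    hleaf2 hinternal2 hn
  obtain ⟨hlex, hbx⟩ := sgst_rank_bound parent root hroot hconn x hx rankx
    hleafx hinternalx hn
  -- edge monotonicity along the path
  have hmono2 : ∀ i < l, rank2 (p (i + 1)) ≤ rank2 (p i) :=
    fun i hi => hle2 _ _ (hpath i hi)
  have hmonox : ∀ i < l, rankx (p (i + 1)) ≤ rankx (p i) :=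
    fun i hi => hlex _ _ (hpath i hi)
  have hcnt2 := count_strict_decr (fun i => rank2 (p i)) l hmono2
  have hcntx := count_strict_decr (fun i => rankx (p i)) l hmonox
  have hl2 : rank2 (p l) = 1 := hleaf2 (p l) hpleaf
  have hlx : rankx (p l) = 1 := hleafx (p l) hpleaf
  have hr2 : rank2 (p 0) ≤ Nat.clog 2 (Fintype.card V) := by rw [hp0]; exact hb2
  have hrx : rankx (p 0) ≤ Nat.clog x (Fintype.card V) := by rw [hp0]; exact hbx
  refine ⟨?_, ?_, ?_⟩
  · -- fast segments
    set S := (Finset.range l).filter (fun i => rank2 (p (i + 1)) = rank2 (p i) ∧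
        (i = 0 ∨ ¬ rank2 (p i) = rank2 (p (i - 1)))) with hS
    set D := (Finset.range l).filter (fun i => rank2 (p (i + 1)) < rank2 (p i)) with hD
    have hmaps : ∀ i ∈ S.erase 0, i - 1 ∈ D := by
      intro i hi
      have hi0 : i ≠ 0 := Finset.ne_of_mem_erase hi
      have hiS : i ∈ S := Finset.mem_of_mem_erase hi
      rw [hS, Finset.mem_filter, Finset.mem_range] at hiS
      obtain ⟨hil, heq, hor⟩ := hiS
      have hne : ¬ rank2 (p i) = rank2 (p (i - 1)) := by
        rcases hor with h0 | h0
        · exact absurd h0 hi0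
        · exact h0
      have hsucc : i - 1 + 1 = i := by omega
      have hm := hmono2 (i - 1) (by omega)
      rw [hsucc] at hm
      rw [hD, Finset.mem_filter, Finset.mem_range, hsucc]
      exact ⟨by omega, lt_of_le_of_ne hm hne⟩
    have hinj : Set.InjOn (fun i => i - 1) (S.erase 0) := by
      intro i hi j hj hij
      have hi0 : i ≠ 0 := Finset.ne_of_mem_erase hi
      have hj0 : j ≠ 0 := Finset.ne_of_mem_erase hj
      simp only at hij
      omega
    have h1 : (S.erase 0).card ≤ D.card := Finset.card_le_card_of_injOn _ hmaps hinj
    have h2 : S.card ≤ (S.erase 0).card + 1 := by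
      by_cases h0 : 0 ∈ S
      · rw [Finset.card_erase_of_mem h0]
        have := Finset.card_pos.mpr ⟨0, h0⟩
        omega
      · rw [Finset.erase_eq_of_notMem h0]; omega
    omega
  · -- slow edges
    have hsub : (Finset.range l).filter (fun i => rank2 (p (i + 1)) < rank2 (p i) ∧
          rankx (p (i + 1)) = rankx (p i)) ⊆
        (Finset.range l).filter (fun i => rank2 (p (i + 1)) < rank2 (p i)) := by
      apply Finset.monotone_filter_right
      intro i _ hi
      exact hi.1
    have := Finset.card_le_card hsub
    omega
  · -- super-slow edges
    omega
end
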